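/- Let F: [0,1]^n → [0,∞) be a nonnegative DR-submodular function and let x, y ∈ [0,1]^n. Then F(x⊛y) ≥ (1 − ‖y‖∞)·F(x). -/

import Mathlib

open scoped InnerProductSpace
open Pointwise

noncomputable section

/-- Vectors in `ℝ^n`, with the Euclidean (ℓ₂) norm and inner product. -/
abbrev Vec (n : ℕ) := EuclideanSpace ℝ (Fin n)

/-- Membership in the box `[0,1]^n`. -/
def inBox {n : ℕ} (x : Vec n) : Prop := ∀ j, 0 ≤ x j ∧ x j ≤ 1

/-- Coordinate-wise (Hadamard) product `x ⊙ y`. -/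
def had {n : ℕ} (x y : Vec n) : Vec n := WithLp.toLp 2 (fun j => x j * y j)

/-- Coordinate-wise probabilistic sum `x ⊛ y`. -/
def psum {n : ℕ} (x y : Vec n) : Vec n := WithLp.toLp 2 (fun j => x j + y j - x j * y j)

/-- The vector `1 - x` (coordinate-wise). -/
def oneM {n : ℕ} (x : Vec n) : Vec n := WithLp.toLp 2 (fun j => 1 - x j)

/-- ℓ∞-norm. -/
def normInf {n : ℕ} (x : Vec n) : ℝ := ⨆ j, |x j|

/-- DR-submodularity of `F : [0,1]^n → ℝ`. -/
def DRSubmodular {n : ℕ} (F : Vec n → ℝ) : Prop :=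
  ∀ a b : Vec n, inBox a → inBox b → (∀ j, a j ≤ b j) →
    ∀ k : ℝ, 0 < k → ∀ i : Fin n, inBox (b + EuclideanSpace.single i k) →
      F (b + EuclideanSpace.single i k) - F b ≤ F (a + EuclideanSpace.single i k) - F a

/-- `P` is down-closed (with respect to the domain `[0,1]^n`). -/
def downClosed {n : ℕ} (P : Set (Vec n)) : Prop :=
  ∀ x y : Vec n, (∀ j, 0 ≤ x j) → (∀ j, x j ≤ y j) → y ∈ P → x ∈ P

set_option maxHeartbeats 1000000

/-- auxiliary: add `v` restricted to `s` -/
def addIf {n : ℕ} (c v : Vec n) (s : Finset (Fin n)) : Vec n :=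
  WithLp.toLp 2 (fun j => c j + (if j ∈ s then v j else 0))

/-- Multi-coordinate DR inequality, by telescoping over coordinates. -/
lemma drMulti {n : ℕ} (F : Vec n → ℝ) (hDR : DRSubmodular F)
    (a b v : Vec n) (ha : inBox a) (hb : inBox b) (hab : ∀ j, a j ≤ b j)
    (hv : ∀ j, 0 ≤ v j) (hbv : ∀ j, b j + v j ≤ 1) :
    F (WithLp.toLp 2 (fun j => b j + v j)) - F b ≤ F (WithLp.toLp 2 (fun j => a j + v j)) - F a := by
  classical
  have hav : ∀ j, a j + v j ≤ 1 := fun j => le_trans (add_le_add (hab j) le_rfl) (hbv j)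
  have hboxgen : ∀ (s : Finset (Fin n)) (c : Vec n), inBox c → (∀ j, c j + v j ≤ 1) →
      inBox (addIf c v s) := by
    intro s c hc hcv j
    constructor
    · have : (0:ℝ) ≤ if j ∈ s then v j else 0 := by
        by_cases h : j ∈ s <;> simp [h, hv j]
      exact add_nonneg (hc j).1 this
    · have h1 : (if j ∈ s then v j else 0) ≤ v j := by
        by_cases h : j ∈ s <;> simp [h, hv j]
      have h2 := hcv j
      show c j + (if j ∈ s then v j else 0) ≤ 1
      linarith
  have key : ∀ s : Finset (Fin n),
      F (addIf b v s) - F b ≤ F (addIf a v s) - F a := by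
    intro s
    induction s using Finset.induction_on with
    | empty =>
        have h1 : ∀ c : Vec n, addIf c v ∅ = c := by
          intro c; ext j; simp [addIf]
        rw [h1 a, h1 b]; simp
    | @insert i s his ih =>
        by_cases hvi : v i = 0
        · have h1 : ∀ (c : Vec n), addIf c v (insert i s) = addIf c v s := by
            intro c; ext j
            rcases eq_or_ne j i with rfl | hji
            · simp [addIf, his, hvi]
            · simp [addIf, hji]
          rw [h1 a, h1 b]; exact ih
        · have hvi' : 0 < v i := lt_of_le_of_ne (hv i) (Ne.symm hvi)
          have hstep : ∀ (c : Vec n),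
              addIf c v (insert i s) = addIf c v s + EuclideanSpace.single i (v i) := by
            intro c; ext j
            have h2 : (addIf c v s + EuclideanSpace.single i (v i)) j
                = (c j + (if j ∈ s then v j else 0)) + (if j = i then v i else 0) := by
              simp [addIf, PiLp.add_apply, EuclideanSpace.single_apply]
            rw [h2]
            rcases eq_or_ne j i with rfl | hji
            · simp [addIf, his]
            · simp [addIf, hji]
          have hA : inBox (addIf a v s) := hboxgen s a ha hav
          have hB : inBox (addIf b v s) := hboxgen s b hb hbv
          have hle : ∀ j, addIf a v s j ≤ addIf b v s j := by
            intro j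
            show a j + _ ≤ b j + _
            exact add_le_add (hab j) le_rfl
          have hBox' : inBox (addIf b v s + EuclideanSpace.single i (v i)) := by
            rw [← hstep b]; exact hboxgen (insert i s) b hb hbv
          have h2 := hDR _ _ hA hB hle (v i) hvi' i hBox'
          rw [hstep a, hstep b]
          linarith
  have h1 : ∀ c : Vec n, addIf c v Finset.univ = (WithLp.toLp 2 (fun j => c j + v j) : Vec n) := by
    intro c; ext j; simp [addIf]
  have hfin := key Finset.univ
  rw [h1 a, h1 b] at hfin
  exact hfin

/-- path point `x + t·((1-x)⊙y)` -/
def ptt {n : ℕ} (x y : Vec n) (t : ℝ) : Vec n := WithLp.toLp 2 (fun j => x j + t * ((1 - x j) * y j))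

lemma ptt_box {n : ℕ} (x y : Vec n) {m : ℝ} (hx : inBox x) (hy0 : ∀ j, 0 ≤ y j)
    (hyle : ∀ j, y j ≤ m) (hm : 0 < m) {t : ℝ} (ht0 : 0 ≤ t) (ht : t ≤ 1 / m) :
    inBox (ptt x y t) := by
  intro j
  have htm : t * m ≤ 1 := by
    have := (le_div_iff₀ hm).mp ht; linarith
  have h1 : (0:ℝ) ≤ 1 - x j := by linarith [(hx j).2]
  have h2 := hy0 j
  have h3 := hyle j
  have h4 := (hx j).1
  constructor
  · have : 0 ≤ t * ((1 - x j) * y j) := mul_nonneg ht0 (mul_nonneg h1 h2)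
    simpa [ptt] using add_nonneg h4 this
  · have h5 : t * y j ≤ 1 := by nlinarith
    have h6 : t * ((1 - x j) * y j) ≤ 1 - x j := by nlinarith
    simp only [ptt, PiLp.toLp_apply]; linarith

lemma ptt_inc {n : ℕ} (x y : Vec n) {m : ℝ} (F : Vec n → ℝ) (hDR : DRSubmodular F)
    (hx : inBox x) (hy0 : ∀ j, 0 ≤ y j) (hyle : ∀ j, y j ≤ m) (hm : 0 < m)
    {t1 t2 h : ℝ} (h0 : 0 ≤ t1) (h12 : t1 ≤ t2) (hh : 0 ≤ h) (hT : t2 + h ≤ 1 / m) :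
    F (ptt x y (t2 + h)) - F (ptt x y t2) ≤ F (ptt x y (t1 + h)) - F (ptt x y t1) := by
  have hx2 : ∀ j, (0:ℝ) ≤ (1 - x j) * y j := fun j =>
    mul_nonneg (by linarith [(hx j).2]) (hy0 j)
  have ht2T : t2 ≤ 1 / m := by linarith
  have ht1T : t1 ≤ 1 / m := by linarith
  have h2 := drMulti F hDR (ptt x y t1) (ptt x y t2) (WithLp.toLp 2 (fun j => h * ((1 - x j) * y j)))
    (ptt_box x y hx hy0 hyle hm h0 ht1T) (ptt_box x y hx hy0 hyle hm (le_trans h0 h12) ht2T)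
    (fun j => by simp only [ptt, PiLp.toLp_apply]; nlinarith [hx2 j])
    (fun j => mul_nonneg hh (hx2 j))
    (fun j => by
      have := (ptt_box x y hx hy0 hyle hm (by linarith : (0:ℝ) ≤ t2 + h) hT j).2
      simp only [ptt, PiLp.toLp_apply] at this ⊢; linarith)
  have e1 : ∀ t : ℝ, (WithLp.toLp 2 (fun j => ptt x y t j + h * ((1 - x j) * y j)) : Vec n) = ptt x y (t + h) := by
    intro t; ext j; simp only [ptt, PiLp.toLp_apply]; ring
  rw [e1 t1, e1 t2] at h2
  exact h2

/-- average of a nonincreasing sequence over a longer prefix is smaller -/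
lemma avg_mono (δ : ℕ → ℝ) (p q : ℕ) (hq : 0 < q) (hqp : q ≤ p)
    (hmono : ∀ i j : ℕ, i ≤ j → j < p → δ j ≤ δ i) :
    (q : ℝ) * ∑ j ∈ Finset.range p, δ j ≤ (p : ℝ) * ∑ j ∈ Finset.range q, δ j := by
  have hsplit := Finset.sum_range_add_sum_Ico δ hqp
  have hbound : ∀ j ∈ Finset.Ico q p, (q:ℝ) * δ j ≤ ∑ i ∈ Finset.range q, δ i := by
    intro j hj
    rw [Finset.mem_Ico] at hj
    calc (q:ℝ) * δ j = ∑ _i ∈ Finset.range q, δ j := by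
          rw [Finset.sum_const, Finset.card_range, nsmul_eq_mul]
      _ ≤ ∑ i ∈ Finset.range q, δ i := by
          apply Finset.sum_le_sum
          intro i hi
          exact hmono i j (le_of_lt (lt_of_lt_of_le (Finset.mem_range.mp hi) hj.1)) hj.2
  have h2 : (q:ℝ) * ∑ j ∈ Finset.Ico q p, δ j ≤
      ((p:ℝ) - q) * ∑ i ∈ Finset.range q, δ i := by
    rw [Finset.mul_sum]
    calc ∑ j ∈ Finset.Ico q p, (q:ℝ) * δ j
        ≤ ∑ _j ∈ Finset.Ico q p, ∑ i ∈ Finset.range q, δ i := Finset.sum_le_sum hbound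
      _ = ((p - q : ℕ):ℝ) * ∑ i ∈ Finset.range q, δ i := by
          rw [Finset.sum_const, Nat.card_Ico, nsmul_eq_mul]
      _ = ((p:ℝ) - q) * ∑ i ∈ Finset.range q, δ i := by
          rw [Nat.cast_sub hqp]
  rw [← hsplit, mul_add]
  nlinarith [h2]

/-- Corollary 2.3 / `cor:norm_bound`: for a nonnegative DR-submodular
function `F` on `[0,1]^n` and `x, y ∈ [0,1]^n`, `F(x ⊛ y) ≥ (1 − ‖y‖∞)·F(x)`. -/
theorem stmt_1 {n : ℕ} (F : Vec n → ℝ)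
    (hF0 : ∀ x, inBox x → 0 ≤ F x)
    (hDR : DRSubmodular F)
    (x y : Vec n) (hx : inBox x) (hy : inBox y) :
    (1 - normInf y) * F x ≤ F (psum x y) := by
  have hy0 : ∀ j, 0 ≤ y j := fun j => (hy j).1
  have hm0 : 0 ≤ normInf y := Real.iSup_nonneg fun j => abs_nonneg _
  have hyle : ∀ j, y j ≤ normInf y := fun j =>
    (le_abs_self _).trans
      (le_ciSup (f := fun j => |y j|) (Set.Finite.bddAbove (Set.finite_range _)) j)
  set m := normInf y with hmdef
  have hps : inBox (psum x y) := by
    intro j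
    have h1 := (hx j).1; have h2 := (hx j).2; have h3 := (hy j).1; have h4 := (hy j).2
    constructor <;> simp only [psum, PiLp.toLp_apply] <;> nlinarith
  have hFx0 := hF0 x hx
  have hFp0 := hF0 _ hps
  by_cases hm1 : 1 ≤ m
  · nlinarith
  push_neg at hm1
  by_cases hmz : m ≤ 0
  · have hyz : ∀ j, y j = 0 := fun j => le_antisymm ((hyle j).trans hmz) (hy0 j)
    have hpx : psum x y = x := by ext j; simp [psum, hyz j]
    have hmz' : m = 0 := le_antisymm hmz hm0
    rw [hpx, hmz']; norm_num
  push_neg at hmz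
  have hpt1 : ptt x y 1 = psum x y := by ext j; simp only [ptt, psum, PiLp.toLp_apply]; ring
  have hpt0 : ptt x y 0 = x := by ext j; simp [ptt]
  -- grid inequality
  have hgrid : ∀ p q : ℕ, 0 < q → q ≤ p → (p : ℝ) ≤ (q:ℝ) / m →
      (1 - (q:ℝ)/(p:ℝ)) * F x ≤ F (psum x y) := by
    intro p q hq hqp hpm
    have hq0 : (0:ℝ) < q := Nat.cast_pos.mpr hq
    have hp0 : (0:ℝ) < p := lt_of_lt_of_le hq0 (Nat.cast_le.mpr hqp)
    have hpm' : (p:ℝ) * m ≤ q := (le_div_iff₀ hmz).mp hpm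
    set G : ℕ → ℝ := fun j => F (ptt x y ((j:ℝ) / (q:ℝ))) with hG
    have hstepin : ∀ j : ℕ, j ≤ p → ((j:ℝ)/(q:ℝ)) ≤ 1/m := by
      intro j hj
      rw [div_le_div_iff₀ hq0 hmz]
      have hjp : (j:ℝ) ≤ (p:ℝ) := Nat.cast_le.mpr hj
      nlinarith
    have hmono : ∀ i j : ℕ, i ≤ j → j < p → G (j+1) - G j ≤ G (i+1) - G i := by
      intro i j hij hjp
      have e : ∀ k : ℕ, ((k:ℝ)/(q:ℝ) + 1/(q:ℝ)) = (((k+1:ℕ)):ℝ)/(q:ℝ) := by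
        intro k; push_cast; rw [← add_div]
      have hkey := ptt_inc x y F hDR hx hy0 hyle hmz
        (div_nonneg (Nat.cast_nonneg i) hq0.le)
        ((div_le_div_iff_of_pos_right hq0).mpr (Nat.cast_le.mpr hij))
        (by positivity : (0:ℝ) ≤ 1/(q:ℝ))
        (by rw [e j]; exact hstepin (j+1) hjp)
      rw [e i, e j] at hkey
      simp only [hG]
      exact hkey
    have hanti := avg_mono (fun j => G (j+1) - G j) p q hq hqp hmono
    rw [Finset.sum_range_sub G p, Finset.sum_range_sub G q] at hanti
    have hGq : G q = F (ptt x y 1) := by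
      simp only [hG]; rw [div_self (ne_of_gt hq0)]
    have hG0 : G 0 = F x := by
      simp only [hG]; norm_num [hpt0]
    have hGp0 : 0 ≤ G p := hF0 _ (ptt_box x y hx hy0 hyle hmz
      (div_nonneg (Nat.cast_nonneg p) hq0.le) (hstepin p le_rfl))
    rw [hGq, hG0] at hanti
    rw [← hpt1]
    have h6 : (1 - (q:ℝ)/(p:ℝ)) * F x = ((p:ℝ) * F x - (q:ℝ) * F x)/(p:ℝ) := by
      field_simp
    rw [h6, div_le_iff₀ hp0]
    nlinarith [mul_nonneg hq0.le hGp0, hanti]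
  -- epsilon argument
  refine le_of_forall_pos_le_add (fun ε hε => ?_)
  set ε' : ℝ := ε / (F x + 1) with hε'
  have hε'0 : 0 < ε' := div_pos hε (by linarith)
  obtain ⟨N, hN⟩ := exists_nat_gt (max (m * (m + ε') / ε') 1)
  have hN1 : (1:ℝ) < (N:ℝ) := lt_of_le_of_lt (le_max_right _ _) hN
  have hNb : m * (m + ε') / ε' < N := lt_of_le_of_lt (le_max_left _ _) hN
  set p := Nat.floor ((N:ℝ)/m) with hp
  have hNm : (0:ℝ) ≤ (N:ℝ)/m := div_nonneg (by positivity) hmz.le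
  have hfl : (p:ℝ) ≤ (N:ℝ)/m := Nat.floor_le hNm
  have hfl2 : (N:ℝ)/m < p + 1 := Nat.lt_floor_add_one _
  have hqp : N ≤ p := by
    rw [hp]
    apply Nat.le_floor
    rw [le_div_iff₀ hmz]
    nlinarith [Nat.cast_nonneg (α := ℝ) N]
  have hq : 0 < N := by
    by_contra h
    push_neg at h
    interval_cases N
    norm_num at hN1
  have hgb := hgrid p N hq hqp hfl
  have hp0 : (0:ℝ) < p := lt_of_lt_of_le (by linarith) (Nat.cast_le.mpr hqp)
  have hb : (N:ℝ)/(p:ℝ) ≤ m + ε' := by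
    rw [div_le_iff₀ hp0]
    have h1' : (N:ℝ) < ((p:ℝ) + 1) * m := by
      rw [div_lt_iff₀ hmz] at hfl2; linarith
    have h2 : m * (m + ε') < (N:ℝ) * ε' := by
      rw [div_lt_iff₀ hε'0] at hNb; linarith
    have h3 : ((N:ℝ) - m) * (m + ε') < ((p:ℝ) * m) * (m + ε') := by
      apply mul_lt_mul_of_pos_right _ (by linarith)
      linarith
    have h4 : m * (N:ℝ) < m * ((m + ε') * (p:ℝ)) := by nlinarith [h3, h2]
    exact le_of_lt ((mul_lt_mul_iff_right₀ hmz).mp h4)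
  have hmain : (1 - (m + ε')) * F x ≤ F (psum x y) := by
    refine le_trans ?_ hgb
    nlinarith [mul_nonneg (sub_nonneg.mpr hb) hFx0]
  have hεb : ε' * F x ≤ ε := by
    rw [hε', div_mul_eq_mul_div, div_le_iff₀ (by linarith : (0:ℝ) < F x + 1)]
    nlinarith
  nlinarith [hmain, hεb]
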